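/- Let k ≥ 1 and let H be a graph consisting of an even cycle C_0 together with 2k − 1 chords of C_0 all incident with one common vertex x of C_0 (a chord is an edge joining two vertices of C_0 that are not adjacent on C_0). Suppose H has at most k distinct even cycle lengths. Then there is an odd integer O_1 ≥ 3 such that the length of C_0 equals k(O_1 − 1) + 2, C_0 is a longest even cycle of H, and the set of even cycle lengths of H is exactly { i(O_1 − 1) + 2 : 1 ≤ i ≤ k }. -/

import Mathlib

open SimpleGraph

/-- `G` contains a cycle of length `n`. -/
def SimpleGraph.HasCycleLength {V : Type*} (G : SimpleGraph V) (n : ℕ) : Prop :=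
  ∃ (v : V) (c : G.Walk v v), c.IsCycle ∧ c.length = n

/-- `L_o(G)`: the set of odd cycle lengths of `G`. -/
def SimpleGraph.oddCycleLengths {V : Type*} (G : SimpleGraph V) : Set ℕ :=
  {n | Odd n ∧ G.HasCycleLength n}

/-- `L_e(G)`: the set of even cycle lengths of `G`. -/
def SimpleGraph.evenCycleLengths {V : Type*} (G : SimpleGraph V) : Set ℕ :=
  {n | Even n ∧ G.HasCycleLength n}

/-- `G` is 2-connected: at least 3 vertices, and deleting any single vertex
leaves a connected graph. -/
def SimpleGraph.TwoConnected {V : Type*} [Fintype V] (G : SimpleGraph V) : Prop :=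
  3 ≤ Fintype.card V ∧ ∀ v : V, (G.induce {v}ᶜ).Connected

namespace EvenCycleAux

variable {V : Type*} {G : SimpleGraph V}

open SimpleGraph.Walk

lemma support_eq_map_getVert {u v : V} (p : G.Walk u v) :
    p.support = (List.range (p.length + 1)).map p.getVert := by
  induction p with
  | nil =>
    have : List.range 1 = [0] := rfl
    simp [this]
  | cons h q ih =>
    rw [Walk.support_cons, ih, Walk.length_cons]
    rw [List.range_succ_eq_map (n := q.length + 1), List.map_cons, List.map_map]
    congr 1

lemma tail_support_eq_map {u v : V} (p : G.Walk u v) :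
    p.support.tail = (List.range p.length).map (fun i => p.getVert (i + 1)) := by
  rw [support_eq_map_getVert, List.range_succ_eq_map]
  simp [List.map_map, Function.comp_def, Nat.succ_eq_add_one]

lemma getVert_injOn_cycle {x : V} {c : G.Walk x x} (hc : c.IsCycle)
    {i j : ℕ} (hi1 : 1 ≤ i) (hi : i ≤ c.length) (hj1 : 1 ≤ j) (hj : j ≤ c.length)
    (h : c.getVert i = c.getVert j) : i = j := by
  have hnd : c.support.tail.Nodup := ((Walk.isCycle_def c).mp hc).2.2
  rw [tail_support_eq_map] at hnd
  have hinj := (List.nodup_map_iff_inj_on List.nodup_range).mp hnd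
  have := hinj (i - 1) (List.mem_range.mpr (by omega)) (j - 1) (List.mem_range.mpr (by omega))
    (by rw [Nat.sub_add_cancel hi1, Nat.sub_add_cancel hj1]; exact h)
  omega

lemma firstEdge_mem {u v : V} (p : G.Walk u v) (hp : p.length ≠ 0) :
    s(u, p.getVert 1) ∈ p.edges := by
  cases p with
  | nil => simp at hp
  | cons h q => simp [Walk.getVert_cons_succ]

lemma cycle_length_le_card [Fintype V] {u : V} {p : G.Walk u u} (hp : p.IsCycle) :
    p.length ≤ Fintype.card V := by
  have h := ((Walk.isCycle_def p).mp hp).2.2.length_le_card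
  have h2 := p.length_support
  have h3 : p.support.tail.length = p.support.length - 1 := by simp
  omega

lemma getVert_takeUntil [DecidableEq V] {u v w : V} (p : G.Walk u v) (h : w ∈ p.support)
    {i : ℕ} (hi : i ≤ (p.takeUntil w h).length) : (p.takeUntil w h).getVert i = p.getVert i := by
  conv_rhs => rw [← p.take_spec h]
  rw [Walk.getVert_append]
  rcases lt_or_eq_of_le hi with h' | h'
  · simp [h']
  · subst h'
    simp [Walk.getVert_length]

lemma getVert_dropUntil [DecidableEq V] {u v w : V} (p : G.Walk u v) (h : w ∈ p.support)
    (i : ℕ) : (p.dropUntil w h).getVert i = p.getVert ((p.takeUntil w h).length + i) := by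
  have h2 := Walk.getVert_append (p.takeUntil w h) (p.dropUntil w h) ((p.takeUntil w h).length + i)
  rw [p.take_spec h] at h2
  simp at h2
  exact h2.symm

lemma ap_lemma (k : ℕ) (u : ℕ → ℕ)
    (hmono : ∀ i j, i < j → j < k → u i < u j)
    (hdiff : ∀ i j, i < j → j < k → ∃ m, 1 ≤ m ∧ m < k ∧ u j - u i = u m - u 0) :
    ∀ j, j < k → u j = u 0 + j * (u 1 - u 0) := by
  intro j
  induction j using Nat.strong_induction_on with
  | _ j ih =>
    intro hjk
    match j with
    | 0 => simp
    | 1 =>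
      have := hmono 0 1 one_pos hjk
      omega
    | (j+2) =>
      have h01 : u 0 < u 1 := hmono 0 1 one_pos (by omega)
      have hj1 : u (j+1) = u 0 + (j+1) * (u 1 - u 0) := ih (j+1) (by omega) (by omega)
      have hlt : u (j+1) < u (j+2) := hmono (j+1) (j+2) (by omega) hjk
      have h1lt : u 1 < u (j+2) := hmono 1 (j+2) (by omega) hjk
      obtain ⟨m, hm1, hmk, hmeq⟩ := hdiff (j+1) (j+2) (by omega) hjk
      have hum : u 1 ≤ u m := by
        rcases eq_or_lt_of_le hm1 with h | h
        · rw [← h]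
        · exact (hmono 1 m h hmk).le
      obtain ⟨m', hm'1, hm'k, hm'eq⟩ := hdiff 1 (j+2) (by omega) hjk
      have h0m' : u 0 ≤ u m' := (hmono 0 m' (by omega) hm'k).le
      have hm'lt : u m' < u (j+2) := by omega
      have hm'j : m' < j + 2 := by
        by_contra hcon
        rcases eq_or_lt_of_le (not_lt.mp hcon) with h | h
        · rw [← h] at hm'lt; omega
        · exact absurd (hmono (j+2) m' h hm'k) (by omega)
      have hm'le : u m' ≤ u (j+1) := by
        rcases eq_or_lt_of_le (Nat.lt_succ_iff.mp hm'j) with h | h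
        · rw [h]
        · exact (hmono m' (j+1) h (by omega)).le
      have hBA : (j+2) * (u 1 - u 0) = (j+1) * (u 1 - u 0) + (u 1 - u 0) := by ring
      generalize hA : (j+1) * (u 1 - u 0) = A at hj1 hBA
      generalize hB : (j+2) * (u 1 - u 0) = B at hBA ⊢
      omega

end EvenCycleAux

open EvenCycleAux in
theorem even_cycle_lengths_of_chords {V : Type*} [Fintype V] [DecidableEq V]
    (H : SimpleGraph V) [DecidableRel H.Adj] (k : ℕ) (hk : 1 ≤ k)
    (x : V) (c : H.Walk x x) (hc : c.IsHamiltonianCycle) (hceven : Even c.length)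
    (hchords : (H.edgeFinset \ c.edges.toFinset).card = 2 * k - 1)
    (hinc : ∀ e ∈ H.edgeFinset \ c.edges.toFinset, x ∈ e)
    (hL : (H.evenCycleLengths).ncard ≤ k) :
    ∃ O₁ : ℕ, Odd O₁ ∧ 3 ≤ O₁ ∧
      c.length = k * (O₁ - 1) + 2 ∧
      (∀ n ∈ H.evenCycleLengths, n ≤ c.length) ∧
      H.evenCycleLengths = {n | ∃ i, 1 ≤ i ∧ i ≤ k ∧ n = i * (O₁ - 1) + 2} := by
  classical
  have hcyc := hc.isCycle
  set n := c.length with hn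
  have hn3 : 3 ≤ n := hcyc.three_le_length
  have hn4 : 4 ≤ n := by rw [Nat.even_iff] at hceven; omega
  have hcl : c.length = n := rfl
  have hmem : ∀ v : V, v ∈ c.support := fun v => hc.mem_support v
  have hcard : n = Fintype.card V := hc.length_eq
  set pos : V → ℕ := fun y => (c.takeUntil y (hmem y)).length with hposdef
  have hpos_le : ∀ y, pos y ≤ n := fun y => c.length_takeUntil_le (hmem y)
  have hsplit : ∀ y, pos y + (c.dropUntil y (hmem y)).length = n := by
    intro y
    have h2 := congrArg Walk.length (c.take_spec (hmem y))
    rwa [Walk.length_append] at h2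
  have hposV : ∀ y, c.getVert (pos y) = y := by
    intro y
    have h := (getVert_takeUntil c (hmem y) (le_refl (c.takeUntil y (hmem y)).length)).symm
    rwa [Walk.getVert_length] at h
  have hxn : c.getVert n = x := Walk.getVert_length c
  have hpos_inj : ∀ y z, pos y = pos z → y = z := by
    intro y z h
    rw [← hposV y, ← hposV z, h]
  have hpos_pos : ∀ y, y ≠ x → 1 ≤ pos y := by
    intro y hy
    by_contra hcon
    have h0 : pos y = 0 := by omega
    apply hy
    rw [← hposV y, h0, Walk.getVert_zero]
  have hpos_lt : ∀ y, y ≠ x → pos y ≤ n - 1 := by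
    intro y hy
    have h := hpos_le y
    rcases eq_or_lt_of_le h with h' | h'
    · exact absurd (by rw [← hposV y, h', hxn]) (Ne.symm hy)
    · omega
  have hdrop_len : ∀ y, (c.dropUntil y (hmem y)).length = n - pos y := by
    intro y; have := hsplit y; omega
  have hgetdrop : ∀ y i, (c.dropUntil y (hmem y)).getVert i = c.getVert (pos y + i) :=
    fun y i => getVert_dropUntil c (hmem y) i
  have htake_path : ∀ y, y ≠ x → (c.takeUntil y (hmem y)).IsPath := by
    intro y hy
    rw [Walk.isPath_def, support_eq_map_getVert]
    refine (List.nodup_map_iff_inj_on List.nodup_range).mpr ?_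
    intro i hi j hj hij
    rw [List.mem_range] at hi hj
    have hbr : (c.takeUntil y (hmem y)).length = pos y := rfl
    have hi' : i ≤ pos y := by omega
    have hj' : j ≤ pos y := by omega
    rw [getVert_takeUntil c (hmem y) hi', getVert_takeUntil c (hmem y) hj'] at hij
    have hylt := hpos_lt y hy
    rcases Nat.eq_zero_or_pos i with h0i | h1i
    · rcases Nat.eq_zero_or_pos j with h0j | h1j
      · omega
      · exfalso
        subst h0i
        rw [Walk.getVert_zero] at hij
        have h23 : c.getVert j = c.getVert n := by rw [← hij, hxn]
        have := getVert_injOn_cycle hcyc h1j (show j ≤ c.length by omega)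
          (show 1 ≤ n by omega) (show n ≤ c.length by omega) h23
        omega
    · rcases Nat.eq_zero_or_pos j with h0j | h1j
      · exfalso
        subst h0j
        rw [Walk.getVert_zero] at hij
        have h23 : c.getVert i = c.getVert n := by rw [hij, hxn]
        have := getVert_injOn_cycle hcyc h1i (show i ≤ c.length by omega)
          (show 1 ≤ n by omega) (show n ≤ c.length by omega) h23
        omega
      · exact getVert_injOn_cycle hcyc h1i (show i ≤ c.length by omega) h1j
          (show j ≤ c.length by omega) hij
  have hdrop_path : ∀ y, y ≠ x → (c.dropUntil y (hmem y)).IsPath := by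
    intro y hy
    rw [Walk.isPath_def, support_eq_map_getVert]
    refine (List.nodup_map_iff_inj_on List.nodup_range).mpr ?_
    intro i hi j hj hij
    rw [List.mem_range, hdrop_len] at hi hj
    rw [hgetdrop, hgetdrop] at hij
    have h1 := hpos_pos y hy
    have h2 := hpos_le y
    have := getVert_injOn_cycle hcyc (show 1 ≤ pos y + i by omega)
      (show pos y + i ≤ c.length by omega) (show 1 ≤ pos y + j by omega)
      (show pos y + j ≤ c.length by omega) hij
    omega
  -- chords
  set S := H.edgeFinset \ c.edges.toFinset with hSdef
  set oth : Sym2 V → V := fun e => if h : x ∈ e then Sym2.Mem.other' h else x with hothdef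
  have hoth : ∀ e ∈ S, H.Adj x (oth e) ∧ oth e ≠ x ∧ s(x, oth e) = e ∧ s(x, oth e) ∉ c.edges := by
    intro e he
    have hxe : x ∈ e := hinc e he
    have hspec : s(x, oth e) = e := by
      rw [hothdef]
      simp only [dif_pos hxe]
      exact Sym2.other_spec' hxe
    have heE : e ∈ H.edgeSet := by
      rw [Finset.mem_sdiff] at he
      exact (SimpleGraph.mem_edgeFinset).mp he.1
    have hadj : H.Adj x (oth e) := by rw [← SimpleGraph.mem_edgeSet, hspec]; exact heE
    have hnotc : s(x, oth e) ∉ c.edges := by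
      rw [Finset.mem_sdiff] at he
      rw [hspec]
      intro hmm
      exact he.2 (List.mem_toFinset.mpr hmm)
    exact ⟨hadj, hadj.ne', hspec, hnotc⟩
  set P : Finset ℕ := S.image (fun e => pos (oth e)) with hPdef
  have hPcard : P.card = 2 * k - 1 := by
    rw [hPdef, Finset.card_image_of_injOn, hchords]
    intro e₁ h₁ e₂ h₂ hpe
    have h3 := hpos_inj _ _ hpe
    rw [← (hoth e₁ h₁).2.2.1, ← (hoth e₂ h₂).2.2.1, h3]
  have hPelim : ∀ p ∈ P, ∃ y : V, pos y = p ∧ H.Adj x y ∧ y ≠ x ∧ s(x, y) ∉ c.edges := by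
    intro p hp
    rw [hPdef, Finset.mem_image] at hp
    obtain ⟨e, he, rfl⟩ := hp
    obtain ⟨h1, h2, h3, h4⟩ := hoth e he
    exact ⟨oth e, rfl, h1, h2, h4⟩
  have hPbound : ∀ p ∈ P, 2 ≤ p ∧ p ≤ n - 2 := by
    intro p hp
    obtain ⟨y, rfl, hadj, hyx, hnc⟩ := hPelim p hp
    have h1 := hpos_pos y hyx
    have h2 := hpos_lt y hyx
    constructor
    · rcases eq_or_lt_of_le h1 with h | h
      · exfalso
        have hlen1 : (c.takeUntil y (hmem y)).length = 1 := h.symm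
        have hmem1 := firstEdge_mem (c.takeUntil y (hmem y)) (by omega)
        have hgv : (c.takeUntil y (hmem y)).getVert 1 = y := by
          have h5 := Walk.getVert_length (c.takeUntil y (hmem y))
          rwa [hlen1] at h5
        rw [hgv] at hmem1
        exact hnc (c.edges_takeUntil_subset (hmem y) hmem1)
      · omega
    · by_contra hcon
      have hpe : pos y = n - 1 := by omega
      have hdl : (c.dropUntil y (hmem y)).length = 1 := by rw [hdrop_len]; omega
      have hmem1 := firstEdge_mem (c.dropUntil y (hmem y)) (by omega)
      have hgv : (c.dropUntil y (hmem y)).getVert 1 = x := by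
        have h5 := Walk.getVert_length (c.dropUntil y (hmem y))
        rwa [hdl] at h5
      rw [hgv] at hmem1
      apply hnc
      have h6 : s(y, x) ∈ c.edges := c.edges_dropUntil_subset (hmem y) hmem1
      rwa [Sym2.eq_swap] at h6
  have hone : ∀ p ∈ P, H.HasCycleLength (p + 1) ∧ H.HasCycleLength (n - p + 1) := by
    intro p hp
    obtain ⟨y, rfl, hadj, hyx, hnc⟩ := hPelim p hp
    constructor
    · refine ⟨x, Walk.cons hadj (c.takeUntil y (hmem y)).reverse, ?_, ?_⟩
      · refine SimpleGraph.Path.cons_isCycle ⟨(c.takeUntil y (hmem y)).reverse, (htake_path y hyx).reverse⟩ hadj ?_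
        intro hmm
        rw [Walk.edges_reverse, List.mem_reverse] at hmm
        exact hnc (c.edges_takeUntil_subset (hmem y) hmm)
      · rw [Walk.length_cons, Walk.length_reverse]
    · refine ⟨x, Walk.cons hadj (c.dropUntil y (hmem y)), ?_, ?_⟩
      · refine SimpleGraph.Path.cons_isCycle ⟨(c.dropUntil y (hmem y)), hdrop_path y hyx⟩ hadj ?_
        intro hmm
        exact hnc (c.edges_dropUntil_subset (hmem y) hmm)
      · rw [Walk.length_cons, hdrop_len y]
  have htwo : ∀ p ∈ P, ∀ q ∈ P, p < q → H.HasCycleLength (q - p + 2) := by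
    intro p hp q hq hpq
    obtain ⟨u, rfl, hadju, hux, hncu⟩ := hPelim p hp
    obtain ⟨v, rfl, hadjv, hvx, hncv⟩ := hPelim q hq
    have huv : u ≠ v := by
      intro h
      rw [h] at hpq
      omega
    have hvdrop : v ∈ (c.dropUntil u (hmem u)).support := by
      rw [Walk.mem_support_iff_exists_getVert]
      refine ⟨pos v - pos u, ?_, ?_⟩
      · rw [hgetdrop]
        have h7 : pos u + (pos v - pos u) = pos v := by omega
        rw [h7, hposV]
      · rw [hdrop_len]
        have := hpos_lt v hvx
        omega
    have hmpath : ((c.dropUntil u (hmem u)).takeUntil v hvdrop).IsPath :=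
      (hdrop_path u hux).takeUntil hvdrop
    have hmle : ((c.dropUntil u (hmem u)).takeUntil v hvdrop).length ≤ n - pos u := by
      have h8 := Walk.length_takeUntil_le (c.dropUntil u (hmem u)) hvdrop
      rwa [hdrop_len] at h8
    have hmlen : ((c.dropUntil u (hmem u)).takeUntil v hvdrop).length = pos v - pos u := by
      have h1 : (c.dropUntil u (hmem u)).getVert ((c.dropUntil u (hmem u)).takeUntil v hvdrop).length = v := by
        have h9 := (getVert_takeUntil (c.dropUntil u (hmem u)) hvdrop
          (le_refl ((c.dropUntil u (hmem u)).takeUntil v hvdrop).length)).symm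
        rwa [Walk.getVert_length] at h9
      rw [hgetdrop] at h1
      have hupos := hpos_pos u hux
      have hvpos := hpos_pos v hvx
      have hvlt := hpos_lt v hvx
      have hne : pos u + ((c.dropUntil u (hmem u)).takeUntil v hvdrop).length ≤ n - 1 := by
        by_contra hcon
        have hEq : pos u + ((c.dropUntil u (hmem u)).takeUntil v hvdrop).length = n := by
          have h20 := hpos_le u
          omega
        rw [hEq, hxn] at h1
        exact hvx h1.symm
      have h21 : c.getVert (pos u + ((c.dropUntil u (hmem u)).takeUntil v hvdrop).length)
          = c.getVert (pos v) := by rw [h1, hposV]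
      have := getVert_injOn_cycle hcyc
        (show 1 ≤ pos u + ((c.dropUntil u (hmem u)).takeUntil v hvdrop).length by omega)
        (show pos u + ((c.dropUntil u (hmem u)).takeUntil v hvdrop).length ≤ c.length by omega)
        (show 1 ≤ pos v from hvpos) (show pos v ≤ c.length by omega) h21
      omega
    have hxm : x ∉ ((c.dropUntil u (hmem u)).takeUntil v hvdrop).support := by
      intro hxmem
      rw [Walk.mem_support_iff_exists_getVert] at hxmem
      obtain ⟨i, hgi, hile⟩ := hxmem
      rw [getVert_takeUntil _ hvdrop hile, hgetdrop] at hgi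
      have hupos := hpos_pos u hux
      have hvlt := hpos_lt v hvx
      have h22 : c.getVert (pos u + i) = c.getVert n := by rw [hgi, hxn]
      have := getVert_injOn_cycle hcyc (show 1 ≤ pos u + i by omega)
        (show pos u + i ≤ c.length by omega) (show 1 ≤ n by omega)
        (show n ≤ c.length by omega) h22
      omega
    have hw2path : (((c.dropUntil u (hmem u)).takeUntil v hvdrop).append
        (Walk.cons hadjv.symm Walk.nil)).IsPath := by
      rw [Walk.isPath_def, Walk.support_append]
      simp only [Walk.support_cons, Walk.support_nil, List.tail_cons]
      rw [List.nodup_append]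
      refine ⟨hmpath.support_nodup, List.nodup_singleton x, ?_⟩
      intro a ha b hb
      rw [List.mem_singleton] at hb
      subst hb
      exact fun h => hxm (h ▸ ha)
    refine ⟨x, Walk.cons hadju (((c.dropUntil u (hmem u)).takeUntil v hvdrop).append
      (Walk.cons hadjv.symm Walk.nil)), ?_, ?_⟩
    · refine SimpleGraph.Path.cons_isCycle ⟨_, hw2path⟩ hadju ?_
      intro hmm
      rw [Walk.edges_append] at hmm
      rcases List.mem_append.mp hmm with h | h
      · exact hncu (c.edges_dropUntil_subset (hmem u)
          ((c.dropUntil u (hmem u)).edges_takeUntil_subset hvdrop h))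
      · simp only [Walk.edges_cons, Walk.edges_nil, List.mem_singleton] at h
        rw [Sym2.eq_iff] at h
        rcases h with ⟨h1, h2⟩ | ⟨h1, h2⟩
        · exact hux h2
        · exact huv h2
    · rw [Walk.length_cons, Walk.length_append, hmlen, Walk.length_cons, Walk.length_nil]
  -- the set of even cycle lengths as a finset
  have hLsub : H.evenCycleLengths ⊆ Set.Iic n := by
    rintro mlen ⟨-, v, w, hw, rfl⟩
    exact le_trans (cycle_length_le_card hw) (le_of_eq hcard.symm)
  have hfin : H.evenCycleLengths.Finite := (Set.finite_Iic n).subset hLsub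
  have hLcard : hfin.toFinset.card ≤ k := by
    rw [← Set.ncard_eq_toFinset_card _ hfin]
    exact hL
  have hnLmem : n ∈ H.evenCycleLengths := ⟨hceven, x, c, hcyc, rfl⟩
  have hnL : n ∈ hfin.toFinset := (Set.Finite.mem_toFinset hfin).mpr hnLmem
  set M := hfin.toFinset.erase n with hMdef
  have hMcard : M.card ≤ k - 1 := by
    rw [hMdef, Finset.card_erase_of_mem hnL]
    omega
  have hMintro : ∀ mlen, Even mlen → H.HasCycleLength mlen → mlen ≠ n → mlen ∈ M := by
    intro mlen h1 h2 h3
    rw [hMdef, Finset.mem_erase]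
    exact ⟨h3, (Set.Finite.mem_toFinset hfin).mpr ⟨h1, h2⟩⟩
  have hMelim : ∀ mlen ∈ M, mlen < n := by
    intro mlen hm
    rw [hMdef, Finset.mem_erase] at hm
    have := hLsub ((Set.Finite.mem_toFinset hfin).mp hm.2)
    rw [Set.mem_Iic] at this
    rcases hm with ⟨h1, -⟩
    omega
  -- parity split of chord positions
  set Pe := P.filter (fun p => Even p) with hPedef
  set Po := P.filter (fun p => ¬ Even p) with hPodef
  have hPsum : Pe.card + Po.card = 2 * k - 1 := by
    rw [hPedef, hPodef, Finset.card_filter_add_card_filter_not, hPcard]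
  have hPoM : ∀ p ∈ Po, p + 1 ∈ M := by
    intro p hp
    rw [hPodef, Finset.mem_filter] at hp
    obtain ⟨hpP, hpodd⟩ := hp
    have hb := hPbound p hpP
    refine hMintro _ ?_ (hone p hpP).1 (by omega)
    rw [Nat.not_even_iff] at hpodd
    rw [Nat.even_iff]
    omega
  have hPocard : Po.card ≤ k - 1 := by
    have h10 := Finset.card_le_card_of_injOn (fun p => p + 1) hPoM
      (by intro a _ b _ h; simpa using h)
    omega
  have hPene : Pe.Nonempty := Finset.card_pos.mp (by omega)
  set e₁ := Pe.min' hPene with he₁def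
  have he₁Pe : e₁ ∈ Pe := Pe.min'_mem hPene
  have he₁P : e₁ ∈ P := (Finset.mem_filter.mp he₁Pe).1
  have he₁even : Even e₁ := (Finset.mem_filter.mp he₁Pe).2
  have hPeM : ∀ q ∈ Pe.erase e₁, q - e₁ + 2 ∈ M := by
    intro q hq
    rw [Finset.mem_erase] at hq
    obtain ⟨hqne, hqPe⟩ := hq
    have hqP := (Finset.mem_filter.mp hqPe).1
    have hqe : Even q := (Finset.mem_filter.mp hqPe).2
    have hlt : e₁ < q := lt_of_le_of_ne (Pe.min'_le q hqPe) (Ne.symm hqne)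
    have hb1 := hPbound e₁ he₁P
    have hb2 := hPbound q hqP
    refine hMintro _ ?_ (htwo e₁ he₁P q hqP hlt) (by omega)
    rw [Nat.even_iff] at he₁even hqe ⊢
    omega
  have hPeinj : Set.InjOn (fun q => q - e₁ + 2) (Pe.erase e₁ : Finset ℕ) := by
    intro a ha b hb hab
    rw [Finset.mem_coe, Finset.mem_erase] at ha hb
    have h1 := Pe.min'_le a ha.2
    have h2 := Pe.min'_le b hb.2
    simp only at hab
    omega
  have hPeMcard : Pe.card - 1 ≤ M.card := by
    have h1 := Finset.card_le_card_of_injOn _ hPeM hPeinj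
    rw [Finset.card_erase_of_mem he₁Pe] at h1
    omega
  have hPecard : Pe.card = k := by omega
  have hPocard' : Po.card = k - 1 := by omega
  have hMcard' : M.card = k - 1 := by omega
  have hMeq : (Pe.erase e₁).image (fun q => q - e₁ + 2) = M := by
    apply Finset.eq_of_subset_of_card_le
    · intro mlen hmlen
      rw [Finset.mem_image] at hmlen
      obtain ⟨q, hq, rfl⟩ := hmlen
      exact hPeM q hq
    · rw [Finset.card_image_of_injOn hPeinj, Finset.card_erase_of_mem he₁Pe]
      omega
  rcases eq_or_lt_of_le hk with hk1 | hk2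
  · -- k = 1
    have hM0 : M = ∅ := Finset.card_eq_zero.mp (by omega)
    have hLfin1 : hfin.toFinset = {n} := by
      have h11 := Finset.insert_erase hnL
      rw [← h11, ← hMdef, hM0]
      rfl
    refine ⟨n - 1, ?_, by omega, ?_, ?_, ?_⟩
    · rw [Nat.odd_iff]
      rw [Nat.even_iff] at hceven
      omega
    · rw [← hk1]
      omega
    · intro m hm
      exact hLsub hm
    · ext mlen
      simp only [Set.mem_setOf_eq]
      constructor
      · intro hm
        have h12 : mlen ∈ hfin.toFinset := (Set.Finite.mem_toFinset hfin).mpr hm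
        rw [hLfin1, Finset.mem_singleton] at h12
        exact ⟨1, le_rfl, by omega, by omega⟩
      · rintro ⟨i, hi1, hik, rfl⟩
        have hieq : i = 1 := by omega
        subst hieq
        have h13 : 1 * (n - 1 - 1) + 2 = n := by omega
        rw [h13]
        exact hnLmem
  · -- 2 ≤ k
    have hk2' : 2 ≤ k := hk2
    set uN : ℕ → ℕ := fun i => if h : i < k then (Pe.orderEmbOfFin hPecard ⟨i, h⟩ : ℕ) else 0
      with huNdef
    have humem : ∀ i (h : i < k), uN i ∈ Pe := by
      intro i h
      rw [huNdef]
      simp only [dif_pos h]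
      exact Pe.orderEmbOfFin_mem hPecard ⟨i, h⟩
    have humono : ∀ i j, i < j → j < k → uN i < uN j := by
      intro i j hij hjk
      rw [huNdef]
      simp only [dif_pos (lt_trans hij hjk), dif_pos hjk]
      exact (Pe.orderEmbOfFin hPecard).strictMono (show (⟨i, lt_trans hij hjk⟩ : Fin k) < ⟨j, hjk⟩ from hij)
    have hu0e₁ : uN 0 = e₁ := by
      rw [huNdef]
      simp only [dif_pos (show 0 < k by omega)]
      exact Finset.orderEmbOfFin_zero hPecard (by omega)
    have husurj : ∀ q ∈ Pe, ∃ i, i < k ∧ uN i = q := by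
      intro q hq
      have h14 : q ∈ Set.range (Pe.orderEmbOfFin hPecard) := by
        rw [Finset.range_orderEmbOfFin]
        exact hq
      obtain ⟨i, hi⟩ := h14
      refine ⟨i, i.2, ?_⟩
      rw [huNdef]
      simp only [dif_pos i.2]
      rw [← hi]
    have hMchar : ∀ mlen, mlen ∈ M ↔ ∃ j, 1 ≤ j ∧ j < k ∧ mlen = uN j - uN 0 + 2 := by
      intro mlen
      constructor
      · intro hm
        rw [← hMeq, Finset.mem_image] at hm
        obtain ⟨q, hq, rfl⟩ := hm
        rw [Finset.mem_erase] at hq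
        obtain ⟨i, hik, hiq⟩ := husurj q hq.2
        have hine : i ≠ 0 := by
          rintro rfl
          rw [hu0e₁] at hiq
          exact hq.1 hiq.symm
        exact ⟨i, by omega, hik, by rw [hiq, hu0e₁]⟩
      · rintro ⟨j, hj1, hjk, rfl⟩
        rw [← hMeq, Finset.mem_image]
        refine ⟨uN j, ?_, by rw [hu0e₁]⟩
        rw [Finset.mem_erase]
        have h15 := humono 0 j (by omega) hjk
        rw [hu0e₁] at h15
        exact ⟨by omega, humem j hjk⟩
    have hPesub : ∀ i (h : i < k), 2 ≤ uN i ∧ uN i ≤ n - 2 ∧ Even (uN i) := by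
      intro i h
      have h1 := humem i h
      rw [hPedef, Finset.mem_filter] at h1
      exact ⟨(hPbound _ h1.1).1, (hPbound _ h1.1).2, h1.2⟩
    have hdiff : ∀ i j, i < j → j < k → ∃ m', 1 ≤ m' ∧ m' < k ∧ uN j - uN i = uN m' - uN 0 := by
      intro i j hij hjk
      have hik := lt_trans hij hjk
      obtain ⟨hi2, hin, hie⟩ := hPesub i hik
      obtain ⟨hj2, hjn, hje⟩ := hPesub j hjk
      have hlt := humono i j hij hjk
      have hmm : uN j - uN i + 2 ∈ M := by
        refine hMintro _ ?_ ?_ (by omega)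
        · rw [Nat.even_iff] at hie hje ⊢
          omega
        · exact htwo (uN i) ((Finset.mem_filter.mp (humem i hik)).1) (uN j)
            ((Finset.mem_filter.mp (humem j hjk)).1) hlt
      obtain ⟨m', h1, h2, h3⟩ := (hMchar _).mp hmm
      exact ⟨m', h1, h2, by omega⟩
    have hAP := ap_lemma k uN humono hdiff
    set g := uN 1 - uN 0 with hgdef
    have hg01 : uN 0 < uN 1 := humono 0 1 one_pos (by omega)
    have hgev : Even g := by
      obtain ⟨-, -, h0⟩ := hPesub 0 (by omega)
      obtain ⟨-, -, h1⟩ := hPesub 1 (by omega)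
      rw [Nat.even_iff] at h0 h1 ⊢
      rw [hgdef]
      omega
    have hg2 : 2 ≤ g := by
      have : 1 ≤ g := by rw [hgdef]; omega
      rw [Nat.even_iff] at hgev
      omega
    have hMchar' : ∀ mlen, mlen ∈ M ↔ ∃ j, 1 ≤ j ∧ j ≤ k - 1 ∧ mlen = j * g + 2 := by
      intro mlen
      rw [hMchar]
      constructor
      · rintro ⟨j, h1, h2, rfl⟩
        refine ⟨j, h1, by omega, ?_⟩
        rw [hAP j h2, Nat.add_sub_cancel_left]
      · rintro ⟨j, h1, h2, rfl⟩
        refine ⟨j, h1, by omega, ?_⟩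
        rw [hAP j (by omega), Nat.add_sub_cancel_left]
    have hPoelim : ∀ p ∈ Po, ∃ i j, 1 ≤ i ∧ i ≤ k - 1 ∧ 1 ≤ j ∧ j ≤ k - 1 ∧
        p = i * g + 1 ∧ n = i * g + j * g + 2 := by
      intro p hp
      rw [hPodef, Finset.mem_filter] at hp
      obtain ⟨hpP, hpo⟩ := hp
      have hb := hPbound p hpP
      rw [Nat.not_even_iff] at hpo
      have h1 : p + 1 ∈ M := by
        refine hMintro _ ?_ (hone p hpP).1 (by omega)
        rw [Nat.even_iff]
        omega
      have h2 : n - p + 1 ∈ M := by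
        refine hMintro _ ?_ (hone p hpP).2 (by omega)
        rw [Nat.even_iff] at hceven ⊢
        omega
      obtain ⟨i, hi1, hik, hieq⟩ := (hMchar' _).mp h1
      obtain ⟨j, hj1, hjk, hjeq⟩ := (hMchar' _).mp h2
      exact ⟨i, j, hi1, hik, hj1, hjk, by omega, by omega⟩
    obtain ⟨p₀, hp₀⟩ := Finset.card_pos.mp (show 0 < Po.card by omega)
    obtain ⟨i₀, j₀, hi₀1, hi₀k, hj₀1, hj₀k, hp₀eq, hneq⟩ := hPoelim p₀ hp₀
    obtain ⟨N, hNdef⟩ : ∃ N, N = i₀ + j₀ := ⟨_, rfl⟩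
    have hnN : n = N * g + 2 := by
      rw [hNdef, add_mul]
      omega
    have hNk : k ≤ N := by
      have hmax : (k - 1) * g + 2 ∈ M := (hMchar' _).mpr ⟨k - 1, by omega, le_rfl, rfl⟩
      have hltn : (k - 1) * g + 2 < n := hMelim _ hmax
      rw [hnN] at hltn
      have h30 : (k - 1) * g < N * g := by omega
      have h31 := lt_of_mul_lt_mul_right h30 (Nat.zero_le g)
      omega
    have hNk' : N ≤ k := by
      by_contra hcon
      push_neg at hcon
      have hdivi : ∀ p ∈ Po, ∃ i j, 1 ≤ i ∧ i ≤ k - 1 ∧ 1 ≤ j ∧ j ≤ k - 1 ∧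
          p = i * g + 1 ∧ i + j = N ∧ (p - 1) / g = i := by
        intro p hp
        obtain ⟨i, j, hi1, hik, hj1, hjk, hpeq, hneq'⟩ := hPoelim p hp
        have h32 : i * g + j * g = N * g := by omega
        have h33 : (i + j) * g = N * g := by rw [add_mul]; omega
        have h34 : i + j = N := Nat.eq_of_mul_eq_mul_right (by omega) h33
        have h35 : (p - 1) / g = i := by
          rw [hpeq, Nat.add_sub_cancel, Nat.mul_div_cancel i (show 0 < g by omega)]
        exact ⟨i, j, hi1, hik, hj1, hjk, hpeq, h34, h35⟩
      have hmap : ∀ p ∈ Po, (p - 1) / g ∈ Finset.Icc (N - k + 1) (k - 1) := by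
        intro p hp
        obtain ⟨i, j, hi1, hik, hj1, hjk, hpeq, hij, hdiv⟩ := hdivi p hp
        rw [hdiv, Finset.mem_Icc]
        omega
      have hinj2 : Set.InjOn (fun p => (p - 1) / g) Po := by
        intro a ha b hb hab
        rw [Finset.mem_coe] at ha hb
        obtain ⟨ia, ja, _, _, _, _, haeq, -, hda⟩ := hdivi a ha
        obtain ⟨ib, jb, _, _, _, _, hbeq, -, hdb⟩ := hdivi b hb
        simp only at hab
        rw [hda, hdb] at hab
        rw [haeq, hbeq, hab]
      have hcard2 := Finset.card_le_card_of_injOn _ hmap hinj2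
      rw [Nat.card_Icc] at hcard2
      omega
    have hnk : n = k * g + 2 := by
      have h36 : N = k := le_antisymm hNk' hNk
      rw [← h36]
      exact hnN
    refine ⟨g + 1, ?_, by omega, ?_, ?_, ?_⟩
    · rw [Nat.odd_iff]
      rw [Nat.even_iff] at hgev
      omega
    · rw [Nat.add_sub_cancel]
      exact hnk
    · intro m hm
      exact hLsub hm
    · ext mlen
      simp only [Set.mem_setOf_eq]
      constructor
      · intro hm
        have hml : mlen ∈ hfin.toFinset := (Set.Finite.mem_toFinset hfin).mpr hm
        rcases eq_or_ne mlen n with rfl | hne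
        · exact ⟨k, by omega, le_rfl, by rw [Nat.add_sub_cancel]; exact hnk⟩
        · have hmM : mlen ∈ M := by
            rw [hMdef, Finset.mem_erase]
            exact ⟨hne, hml⟩
          obtain ⟨j, h1, h2, h3⟩ := (hMchar' _).mp hmM
          exact ⟨j, h1, by omega, by rw [Nat.add_sub_cancel]; exact h3⟩
      · rintro ⟨i, hi1, hik, rfl⟩
        rcases eq_or_lt_of_le hik with rfl | hlt
        · have h37 : i * (g + 1 - 1) + 2 = n := by rw [Nat.add_sub_cancel]; omega
          rw [h37]
          exact hnLmem
        · have h38 : i * (g + 1 - 1) + 2 ∈ M := by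
            rw [Nat.add_sub_cancel]
            exact (hMchar' _).mpr ⟨i, hi1, by omega, rfl⟩
          have := (Finset.mem_erase.mp h38).2
          exact (Set.Finite.mem_toFinset hfin).mp this
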